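/- Let D be a k×k Metzler matrix, c > 0, and ξ ∈ ℝ^k a positive right eigenvector of D with D ξ = 0 (critical case μ = 0); set ξ̄ = max_i ξ_i. Let u : [0,∞) → ℝ^k be a nonnegative solution of the cumulant system with u_0 = λ ∈ ℝ^k, λ ≥ 0, and C_0 = max_i λ_i/ξ_i. Then for all t ≥ 0, componentwise: 0 ≤ e^{Dt} λ − u_t ≤ (c ξ̄ / 2) C_0 t · e^{Dt} λ, where e^{Dt} is the matrix exponential. -/

import Mathlib

open Filter Topology

open NormedSpace


section Stmt6Bridge

attribute [local instance] Matrix.linftyOpNormedRing Matrix.linftyOpNormedAlgebra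

variable {k : ℕ}

noncomputable def stmt6entryCLM (i j : Fin k) : Matrix (Fin k) (Fin k) ℝ →L[ℝ] ℝ :=
  { toFun := fun B => B i j
    map_add' := fun _ _ => rfl
    map_smul' := fun _ _ => rfl
    cont := (continuous_apply j).comp (continuous_apply i) }

lemma stmt6_entry_hasSum_aux (A : Matrix (Fin k) (Fin k) ℝ) (i j : Fin k) :
    HasSum (fun n : ℕ => (n.factorial : ℝ)⁻¹ * (A ^ n) i j) ((exp A) i j) := by
  have h : HasSum (fun n : ℕ => (n.factorial : ℝ)⁻¹ • A ^ n) (exp A) :=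
    exp_series_hasSum_exp' A
  have hc : Continuous (fun B : Matrix (Fin k) (Fin k) ℝ => B i j) :=
    (continuous_apply j).comp (continuous_apply i)
  have := h.map (AddMonoidHom.mk' (fun B : Matrix (Fin k) (Fin k) ℝ => B i j) (fun _ _ => rfl)) hc
  exact this

lemma stmt6_entry_deriv_aux (D : Matrix (Fin k) (Fin k) ℝ) (i j : Fin k) (s : ℝ) :
    HasDerivAt (fun r : ℝ => (exp (r • D)) i j) ((D * exp (s • D)) i j) s := by
  have h := hasDerivAt_exp_smul_const' (𝕂 := ℝ) D s
  exact ((stmt6entryCLM i j).hasFDerivAt.comp_hasDerivAt s h :)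

end Stmt6Bridge

section Stmt6Main

variable {k : ℕ}

lemma stmt6_entry_hasSum (A : Matrix (Fin k) (Fin k) ℝ) (i j : Fin k) :
    HasSum (fun n : ℕ => (n.factorial : ℝ)⁻¹ * (A ^ n) i j) ((exp A) i j) :=
  stmt6_entry_hasSum_aux A i j

lemma stmt6_entry_deriv (D : Matrix (Fin k) (Fin k) ℝ) (i j : Fin k) (s : ℝ) :
    HasDerivAt (fun r : ℝ => (exp (r • D)) i j) ((D * exp (s • D)) i j) s :=
  stmt6_entry_deriv_aux D i j s

lemma stmt6_exp_entry_nonneg (A : Matrix (Fin k) (Fin k) ℝ) (hA : ∀ i j, 0 ≤ A i j)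
    (i j : Fin k) : 0 ≤ (exp A) i j := by
  have hpow : ∀ (n : ℕ) (i j : Fin k), 0 ≤ (A ^ n) i j := by
    intro n
    induction n with
    | zero => intro i j; simp only [pow_zero, Matrix.one_apply]; positivity
    | succ n ih =>
      intro i j
      rw [pow_succ, Matrix.mul_apply]
      exact Finset.sum_nonneg fun l _ => mul_nonneg (ih i l) (hA l j)
  exact (stmt6_entry_hasSum A i j).nonneg fun n =>
    mul_nonneg (by positivity) (hpow n i j)

lemma stmt6_exp_smul_one (r : ℝ) (i j : Fin k) :
    (exp (r • (1 : Matrix (Fin k) (Fin k) ℝ))) i j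
      = Real.exp r * (1 : Matrix (Fin k) (Fin k) ℝ) i j := by
  have h1 := stmt6_entry_hasSum (r • (1 : Matrix (Fin k) (Fin k) ℝ)) i j
  have heq : (fun n : ℕ => (n.factorial : ℝ)⁻¹ * ((r • (1 : Matrix (Fin k) (Fin k) ℝ)) ^ n) i j)
      = fun n : ℕ => ((n.factorial : ℝ)⁻¹ • r ^ n) * (1 : Matrix (Fin k) (Fin k) ℝ) i j := by
    funext n
    rw [smul_pow, one_pow, Matrix.smul_apply]
    simp [mul_assoc]
  rw [heq] at h1
  have h3 : HasSum (fun n : ℕ => (n.factorial : ℝ)⁻¹ • r ^ n) (exp r) :=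
    exp_series_hasSum_exp' r
  have h4 := h3.mul_right ((1 : Matrix (Fin k) (Fin k) ℝ) i j)
  rw [Real.exp_eq_exp_ℝ]
  exact h1.unique h4

lemma stmt6_exp_metzler_nonneg (D : Matrix (Fin k) (Fin k) ℝ)
    (hM : ∀ i j : Fin k, i ≠ j → 0 ≤ D i j) {s : ℝ} (hs : 0 ≤ s) (i j : Fin k) :
    0 ≤ (exp (s • D)) i j := by
  set α : ℝ := ∑ l, |D l l| with hα_def
  have hα : ∀ l, |D l l| ≤ α :=
    fun l => Finset.single_le_sum (f := fun l => |D l l|) (fun l _ => abs_nonneg _)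
      (Finset.mem_univ l)
  set B : Matrix (Fin k) (Fin k) ℝ := s • D + (s * α) • (1 : Matrix (Fin k) (Fin k) ℝ) with hB
  have hBnn : ∀ i j, 0 ≤ B i j := by
    intro i j
    rcases eq_or_ne i j with rfl | hij
    · simp only [hB, Matrix.add_apply, Matrix.smul_apply, Matrix.one_apply_eq, smul_eq_mul,
        mul_one]
      have h1 : 0 ≤ D i i + α := by
        have := hα i
        have := neg_abs_le (D i i)
        linarith
      nlinarith
    · simp only [hB, Matrix.add_apply, Matrix.smul_apply, Matrix.one_apply_ne hij, smul_eq_mul,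
        mul_zero, add_zero]
      exact mul_nonneg hs (hM i j hij)
  have hsplit : s • D = B + (-(s * α)) • (1 : Matrix (Fin k) (Fin k) ℝ) := by
    simp [hB, add_assoc, ← add_smul]
  have hcomm : Commute B ((-(s * α)) • (1 : Matrix (Fin k) (Fin k) ℝ)) :=
    (Commute.one_right B).smul_right _
  rw [hsplit, Matrix.exp_add_of_commute _ _ hcomm, Matrix.mul_apply]
  refine Finset.sum_nonneg fun l _ => mul_nonneg (stmt6_exp_entry_nonneg B hBnn i l) ?_
  rw [stmt6_exp_smul_one]
  have h2 : (0:ℝ) ≤ (1 : Matrix (Fin k) (Fin k) ℝ) l j := by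
    rcases eq_or_ne l j with rfl | h
    · simp
    · simp [Matrix.one_apply_ne h]
  positivity

lemma stmt6_exp_mulVec_fixed (A : Matrix (Fin k) (Fin k) ℝ) (ξ : Fin k → ℝ)
    (h : A.mulVec ξ = 0) : (exp A).mulVec ξ = ξ := by
  funext i
  have h1 : ∀ j, HasSum (fun n : ℕ => (n.factorial : ℝ)⁻¹ * (A ^ n) i j * ξ j)
      ((exp A) i j * ξ j) := fun j => (stmt6_entry_hasSum A i j).mul_right _
  have h2 : HasSum (fun n : ℕ => ∑ j, (n.factorial : ℝ)⁻¹ * (A ^ n) i j * ξ j)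
      (∑ j, (exp A) i j * ξ j) := hasSum_sum fun j _ => h1 j
  have hterm : (fun n : ℕ => ∑ j, (n.factorial : ℝ)⁻¹ * (A ^ n) i j * ξ j) =
      fun n : ℕ => if n = 0 then ξ i else 0 := by
    funext n
    have hsum : ∑ j, (n.factorial : ℝ)⁻¹ * (A ^ n) i j * ξ j
        = (n.factorial : ℝ)⁻¹ * ((A ^ n).mulVec ξ i) := by
      simp [Matrix.mulVec, dotProduct, Finset.mul_sum, mul_assoc]
    rw [hsum]
    cases n with
    | zero => simp [Matrix.one_mulVec]
    | succ m =>
      have hz : (A ^ (m + 1)).mulVec ξ = 0 := by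
        rw [pow_succ, ← Matrix.mulVec_mulVec, h, Matrix.mulVec_zero]
      simp [hz]
  rw [hterm] at h2
  have h3 : HasSum (fun n : ℕ => if n = 0 then ξ i else 0) (ξ i) := hasSum_ite_eq 0 (ξ i)
  have h4 := h2.unique h3
  simpa [Matrix.mulVec, dotProduct] using h4

lemma stmt6_exp_smul_add (D : Matrix (Fin k) (Fin k) ℝ) (a b : ℝ) :
    exp ((a + b) • D) = exp (a • D) * exp (b • D) := by
  rw [add_smul]
  exact Matrix.exp_add_of_commute _ _ (((Commute.refl D).smul_left a).smul_right b)

lemma stmt6_commute_exp (D : Matrix (Fin k) (Fin k) ℝ) (r : ℝ) :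
    D * exp (r • D) = exp (r • D) * D :=
  ((Commute.refl D).smul_right r).exp_right

lemma stmt6_mulVec_le (P : Matrix (Fin k) (Fin k) ℝ) (hP : ∀ i j, 0 ≤ P i j)
    {v w : Fin k → ℝ} (h : ∀ j, v j ≤ w j) (i : Fin k) :
    P.mulVec v i ≤ P.mulVec w i := by
  simp only [Matrix.mulVec, dotProduct]
  exact Finset.sum_le_sum fun j _ => mul_le_mul_of_nonneg_left (h j) (hP i j)
lemma stmt6_g_deriv (c : ℝ) (D : Matrix (Fin k) (Fin k) ℝ)
    (u : ℝ → Fin k → ℝ)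
    (hsol : ∀ t ∈ Set.Ici (0 : ℝ),
      HasDerivAt u (D.mulVec (u t) - (c / 2) • (u t * u t)) t)
    (t : ℝ) (i : Fin k) {s : ℝ} (hs : 0 ≤ s) :
    HasDerivAt (fun r => (exp ((t - r) • D)).mulVec (u r) i)
      (-(c / 2) * ((exp ((t - s) • D)).mulVec (u s * u s) i)) s := by
  set E : Matrix (Fin k) (Fin k) ℝ := exp ((t - s) • D) with hE
  have huj : ∀ j : Fin k, HasDerivAt (fun r => u r j)
      ((D.mulVec (u s) - (c / 2) • (u s * u s)) j) s := fun j =>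
    ((ContinuousLinearMap.proj (R := ℝ) (φ := fun _ : Fin k => ℝ) j).hasFDerivAt.comp_hasDerivAt
      s (hsol s hs) :)
  have hEj : ∀ j : Fin k, HasDerivAt (fun r : ℝ => exp ((t - r) • D) i j)
      (-((D * E) i j)) s := by
    intro j
    have hinner : HasDerivAt (fun r : ℝ => t - r) (-1) s := (hasDerivAt_id s).const_sub t
    have houter := stmt6_entry_deriv D i j (t - s)
    have := HasDerivAt.comp s houter hinner
    simpa [Function.comp_def] using this
  have hprod : ∀ j : Fin k, HasDerivAt (fun r => exp ((t - r) • D) i j * u r j)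
      (-((D * E) i j) * u s j + E i j * ((D.mulVec (u s) - (c / 2) • (u s * u s)) j)) s :=
    fun j => (hEj j).mul (huj j)
  have hsum := HasDerivAt.sum (fun j (_ : j ∈ Finset.univ) => hprod j)
  have hfun : (fun r => (exp ((t - r) • D)).mulVec (u r) i)
      = fun r => ∑ j, exp ((t - r) • D) i j * u r j := by
    funext r
    simp [Matrix.mulVec, dotProduct]
  rw [hfun]
  convert hsum using 1
  · rfl
  · rfl
  · ext r
    simp [Finset.sum_apply]
  -- value equality
  have hDE : ∑ j, (D * E) i j * u s j = ∑ j, E i j * (D.mulVec (u s)) j := by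
    have h1 : ∑ j, (D * E) i j * u s j = ((D * E).mulVec (u s)) i := by
      simp [Matrix.mulVec, dotProduct]
    have h2 : ∑ j, E i j * (D.mulVec (u s)) j = (E.mulVec (D.mulVec (u s))) i := by
      simp [Matrix.mulVec, dotProduct]
    rw [h1, h2, Matrix.mulVec_mulVec, ← stmt6_commute_exp, ← hE]
  have expand : ∀ j : Fin k,
      -((D * E) i j) * u s j + E i j * ((D.mulVec (u s) - (c / 2) • (u s * u s)) j)
      = (E i j * (D.mulVec (u s)) j - (D * E) i j * u s j)
        + (-(c / 2)) * (E i j * (u s * u s) j) := by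
    intro j
    simp only [Pi.sub_apply, Pi.smul_apply, smul_eq_mul]
    ring
  rw [Finset.sum_congr rfl (fun j _ => expand j), Finset.sum_add_distrib,
    Finset.sum_sub_distrib, hDE, sub_self, zero_add, ← Finset.mul_sum]
  rfl


lemma stmt6_key {k : ℕ} (c : ℝ) (hc : 0 < c) (D : Matrix (Fin k) (Fin k) ℝ)
    (hM : ∀ i j : Fin k, i ≠ j → 0 ≤ D i j)
    (u : ℝ → Fin k → ℝ)
    (hsol : ∀ t ∈ Set.Ici (0 : ℝ),
      HasDerivAt u (D.mulVec (u t) - (c / 2) • (u t * u t)) t)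
    (hnonneg : ∀ t ∈ Set.Ici (0 : ℝ), ∀ i : Fin k, 0 ≤ u t i) :
    ∀ t ≥ (0 : ℝ), ∀ i : Fin k, u t i ≤ (exp (t • D)).mulVec (u 0) i := by
  intro t ht i
  set g : ℝ → ℝ := fun s => (exp ((t - s) • D)).mulVec (u s) i with hg
  have hderiv : ∀ s ∈ Set.Icc (0 : ℝ) t,
      HasDerivAt g (-(c / 2) * ((exp ((t - s) • D)).mulVec (u s * u s) i)) s :=
    fun s hs => stmt6_g_deriv c D u hsol t i hs.1
  have hcont : ContinuousOn g (Set.Icc 0 t) :=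
    fun s hs => (hderiv s hs).continuousAt.continuousWithinAt
  have hdiff : DifferentiableOn ℝ g (interior (Set.Icc 0 t)) := by
    rw [interior_Icc]
    exact fun s hs =>
      ((hderiv s (Set.Ioo_subset_Icc_self hs)).differentiableAt).differentiableWithinAt
  have hdnp : ∀ s ∈ interior (Set.Icc 0 t), deriv g s ≤ 0 := by
    rw [interior_Icc]
    intro s hs
    rw [(hderiv s (Set.Ioo_subset_Icc_self hs)).deriv]
    have h1 : 0 ≤ (exp ((t - s) • D)).mulVec (u s * u s) i := by
      simp only [Matrix.mulVec, dotProduct]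
      refine Finset.sum_nonneg fun j _ => mul_nonneg
        (stmt6_exp_metzler_nonneg D hM (s := t - s) (by linarith [hs.2]) i j) ?_
      have h0 := hnonneg s hs.1.le j
      simpa [Pi.mul_apply] using mul_nonneg h0 h0
    exact mul_nonpos_iff.mpr (Or.inr ⟨by linarith, h1⟩)
  have hanti : AntitoneOn g (Set.Icc 0 t) :=
    antitoneOn_of_deriv_nonpos (convex_Icc 0 t) hcont hdiff hdnp
  have hle := hanti (Set.left_mem_Icc.mpr ht) (Set.right_mem_Icc.mpr ht) ht
  have hgt : g t = u t i := by
    simp [hg, sub_self, zero_smul, exp_zero, Matrix.one_mulVec]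
  have hg0 : g 0 = (exp (t • D)).mulVec (u 0) i := by simp [hg]
  rw [hgt, hg0] at hle
  exact hle

end Stmt6Main

/-- (Inequality (2.18) of the paper, critical case.) For a nonnegative
solution of the cumulant system with `D ξ = 0` (critical case), one has componentwise
`0 ≤ e^{Dt} λ − u_t ≤ (c ξ̄ / 2) C₀ t e^{Dt} λ`. -/
theorem stmt6 (k : ℕ) (hk : 1 ≤ k) (c : ℝ) (hc : 0 < c)
    (D : Matrix (Fin k) (Fin k) ℝ)
    (hMetzler : ∀ i j : Fin k, i ≠ j → 0 ≤ D i j)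
    (ξ : Fin k → ℝ) (hξpos : ∀ i, 0 < ξ i)
    (heig : D.mulVec ξ = 0)
    (lam : Fin k → ℝ) (hlam : ∀ i, 0 ≤ lam i)
    (u : ℝ → Fin k → ℝ)
    (hsol : ∀ t ∈ Set.Ici (0 : ℝ),
      HasDerivAt u (D.mulVec (u t) - (c / 2) • (u t * u t)) t)
    (hnonneg : ∀ t ∈ Set.Ici (0 : ℝ), ∀ i : Fin k, 0 ≤ u t i)
    (hinit : u 0 = lam)
    (C₀ ξmax : ℝ) (hC₀ : C₀ = ⨆ i, lam i / ξ i) (hξmax : ξmax = ⨆ i, ξ i) :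
    ∀ t ≥ (0 : ℝ), ∀ i : Fin k,
      0 ≤ ((NormedSpace.exp (t • D)).mulVec lam) i - u t i ∧
      ((NormedSpace.exp (t • D)).mulVec lam) i - u t i ≤
        c * ξmax / 2 * C₀ * t * ((NormedSpace.exp (t • D)).mulVec lam) i := by
  haveI : Nonempty (Fin k) := Fin.pos_iff_nonempty.mp hk
  -- basic facts
  have hkey : ∀ t ≥ (0 : ℝ), ∀ i : Fin k, u t i ≤ (exp (t • D)).mulVec lam i := by
    have := stmt6_key c hc D hMetzler u hsol hnonneg
    rw [hinit] at this
    exact this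
  have hC₀nn : 0 ≤ C₀ := by
    rw [hC₀]
    have h0 := le_ciSup (Set.Finite.bddAbove (Set.finite_range fun i => lam i / ξ i))
      (Classical.arbitrary (Fin k))
    have := div_nonneg (hlam (Classical.arbitrary (Fin k)))
      (hξpos (Classical.arbitrary (Fin k))).le
    linarith
  have hξle : ∀ j, ξ j ≤ ξmax := by
    intro j
    rw [hξmax]
    exact le_ciSup (Set.Finite.bddAbove (Set.finite_range ξ)) j
  have hlamle : ∀ j, lam j ≤ C₀ * ξ j := by
    intro j
    have h1 : lam j / ξ j ≤ C₀ := by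
      rw [hC₀]
      exact le_ciSup (Set.Finite.bddAbove (Set.finite_range fun i => lam i / ξ i)) j
    exact (div_le_iff₀ (hξpos j)).mp h1
  have hfix : ∀ s : ℝ, (exp (s • D)).mulVec ξ = ξ := by
    intro s
    refine stmt6_exp_mulVec_fixed _ _ ?_
    rw [Matrix.smul_mulVec, heig, smul_zero]
  -- uniform bound on u
  have hubd : ∀ s ≥ (0:ℝ), ∀ j, u s j ≤ C₀ * ξmax := by
    intro s hs j
    have h1 : u s j ≤ (exp (s • D)).mulVec lam j := hkey s hs j
    have h2 : (exp (s • D)).mulVec lam j ≤ (exp (s • D)).mulVec (fun l => C₀ * ξ l) j :=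
      stmt6_mulVec_le _ (fun a b => stmt6_exp_metzler_nonneg D hMetzler hs a b) hlamle j
    have h3 : (exp (s • D)).mulVec (fun l => C₀ * ξ l) j
        = C₀ * ((exp (s • D)).mulVec ξ j) := by
      simp only [Matrix.mulVec, dotProduct, Finset.mul_sum]
      exact Finset.sum_congr rfl fun l _ => by ring
    have h4 : C₀ * ((exp (s • D)).mulVec ξ j) = C₀ * ξ j := by rw [hfix]
    have h5 : C₀ * ξ j ≤ C₀ * ξmax := mul_le_mul_of_nonneg_left (hξle j) hC₀nn
    linarith
  intro t ht i
  constructor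
  · exact sub_nonneg.mpr (hkey t ht i)
  -- upper bound
  set M : ℝ := (exp (t • D)).mulVec lam i with hM
  set K : ℝ := c * ξmax / 2 * C₀ with hK
  set g : ℝ → ℝ := fun s => (exp ((t - s) • D)).mulVec (u s) i with hg
  have hderiv : ∀ s ∈ Set.Icc (0 : ℝ) t,
      HasDerivAt g (-(c / 2) * ((exp ((t - s) • D)).mulVec (u s * u s) i)) s :=
    fun s hs => stmt6_g_deriv c D u hsol t i hs.1
  set h : ℝ → ℝ := fun s => K * M * s + g s with hh
  have hhderiv : ∀ s ∈ Set.Icc (0 : ℝ) t, HasDerivAt h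
      (K * M + -(c / 2) * ((exp ((t - s) • D)).mulVec (u s * u s) i)) s := by
    intro s hs
    have h1 : HasDerivAt (fun s : ℝ => K * M * s) (K * M) s := by
      simpa using (hasDerivAt_id s).const_mul (K * M)
    exact h1.add (hderiv s hs)
  -- derivative nonneg
  have hbound : ∀ s ∈ Set.Icc (0:ℝ) t,
      (c / 2) * ((exp ((t - s) • D)).mulVec (u s * u s) i) ≤ K * M := by
    intro s hs
    have hts : (0:ℝ) ≤ t - s := by linarith [hs.2]
    have hEnn : ∀ a b, 0 ≤ exp ((t - s) • D) a b :=
      fun a b => stmt6_exp_metzler_nonneg D hMetzler hts a b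
    have step1 : ∀ j, (u s * u s) j ≤ (C₀ * ξmax) * u s j := by
      intro j
      have h0 := hnonneg s hs.1 j
      have h1 := hubd s hs.1 j
      simp only [Pi.mul_apply]
      nlinarith
    have step2 : (exp ((t - s) • D)).mulVec (u s * u s) i
        ≤ (exp ((t - s) • D)).mulVec (fun j => (C₀ * ξmax) * u s j) i :=
      stmt6_mulVec_le _ hEnn step1 i
    have step3 : (exp ((t - s) • D)).mulVec (fun j => (C₀ * ξmax) * u s j) i
        = (C₀ * ξmax) * ((exp ((t - s) • D)).mulVec (u s) i) := by
      simp only [Matrix.mulVec, dotProduct, Finset.mul_sum]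
      exact Finset.sum_congr rfl fun l _ => by ring
    have step4 : (exp ((t - s) • D)).mulVec (u s) i
        ≤ (exp ((t - s) • D)).mulVec ((exp (s • D)).mulVec lam) i :=
      stmt6_mulVec_le _ hEnn (fun j => hkey s hs.1 j) i
    have step5 : (exp ((t - s) • D)).mulVec ((exp (s • D)).mulVec lam) i = M := by
      rw [Matrix.mulVec_mulVec, ← stmt6_exp_smul_add, sub_add_cancel]
    have hCξnn : 0 ≤ C₀ * ξmax := by
      have := (hξpos (Classical.arbitrary (Fin k))).le.trans (hξle (Classical.arbitrary (Fin k)))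
      positivity
    have hchain : (exp ((t - s) • D)).mulVec (u s * u s) i ≤ (C₀ * ξmax) * M := by
      calc (exp ((t - s) • D)).mulVec (u s * u s) i
          ≤ (C₀ * ξmax) * ((exp ((t - s) • D)).mulVec (u s) i) := by
            rw [← step3]; exact step2
        _ ≤ (C₀ * ξmax) * M := by
            rw [← step5]
            exact mul_le_mul_of_nonneg_left step4 hCξnn
    have hKM : K * M = (c / 2) * ((C₀ * ξmax) * M) := by rw [hK]; ring
    rw [hKM]
    exact mul_le_mul_of_nonneg_left hchain (by linarith)
  have hmono : MonotoneOn h (Set.Icc 0 t) := by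
    refine monotoneOn_of_deriv_nonneg (convex_Icc 0 t)
      (fun s hs => (hhderiv s hs).continuousAt.continuousWithinAt) ?_ ?_
    · rw [interior_Icc]
      exact fun s hs =>
        ((hhderiv s (Set.Ioo_subset_Icc_self hs)).differentiableAt).differentiableWithinAt
    · rw [interior_Icc]
      intro s hs
      rw [(hhderiv s (Set.Ioo_subset_Icc_self hs)).deriv]
      have := hbound s (Set.Ioo_subset_Icc_self hs)
      linarith
  have hle := hmono (Set.left_mem_Icc.mpr ht) (Set.right_mem_Icc.mpr ht) ht
  have hh0 : h 0 = M := by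
    simp [hh, hg, hinit, hM, sub_zero]
  have hht : h t = K * M * t + u t i := by
    have hgt : g t = u t i := by
      simp [hg, sub_self, zero_smul, exp_zero, Matrix.one_mulVec]
    simp [hh, hgt]
  rw [hh0, hht] at hle
  have : c * ξmax / 2 * C₀ * t * M = K * M * t := by rw [hK]; ring
  rw [hM] at *
  linarith [hle]
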